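/- (The L¹ metric on rational step functions) The function d¹ f g := ‖map2 (·−·) f g‖₁ on S ℚ satisfies the axioms of a metric with respect to the lifted equality ≍: for all f, g, h : S ℚ, (i) 0 ≤ d¹ f g; (ii) d¹ f f = 0; (iii) d¹ f g = d¹ g f; (iv) d¹ f h ≤ d¹ f g + d¹ g h; and (v) d¹ f g = 0 → f ≍ g. -/

import Mathlib

set_option linter.unusedVariables false

/-- Rationals strictly between 0 and 1. -/
abbrev OO : Type := {q : ℚ // 0 < q ∧ q < 1}

/-- Rational step functions on the unit interval with values in `X`. -/
inductive S (X : Type) : Type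
  | const : X → S X
  | glue : OO → S X → S X → S X

namespace S

def divO (a o : OO) (h : a.1 < o.1) : OO :=
  ⟨a.1 / o.1, div_pos a.2.1 o.2.1, (div_lt_one o.2.1).2 h⟩

def subO (a o : OO) (h : o.1 < a.1) : OO :=
  ⟨(a.1 - o.1) / (1 - o.1),
    div_pos (by linarith) (by linarith [o.2.2]),
    (div_lt_one (by linarith [o.2.2])).2 (by linarith [a.2.2])⟩

/-- Left split: the part of the step function on `[0,a]`, rescaled to `[0,1]`. -/
def splitL {X : Type} : S X → OO → S X
  | const x, _ => const x
  | glue o f g, a =>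
      if h : a.1 < o.1 then splitL f (divO a o h)
      else if h' : o.1 < a.1 then glue (divO o a h') f (splitL g (subO a o h'))
      else f

/-- Right split: the part of the step function on `[a,1]`, rescaled to `[0,1]`. -/
def splitR {X : Type} : S X → OO → S X
  | const x, _ => const x
  | glue o f g, a =>
      if h : a.1 < o.1 then glue (subO o a h) (splitR f (divO a o h)) g
      else if h' : o.1 < a.1 then splitR g (subO a o h')
      else g

/-- The catamorphism (fold) for step functions. -/
def fold {X Y : Type} (φ : X → Y) (ψ : OO → Y → Y → Y) : S X → Y
  | const x => φ x
  | glue o f g => ψ o (fold φ ψ f) (fold φ ψ g)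

/-- `map` for step functions. -/
def mapS {X Y : Type} (f : X → Y) : S X → S Y
  | const x => const (f x)
  | glue o l r => glue o (mapS f l) (mapS f r)

/-- The applicative `ap` (pointwise application) for step functions. -/
def ap {X Y : Type} : S (X → Y) → S X → S Y
  | const f, x => mapS f x
  | glue o fl fr, x => glue o (ap fl (splitL x o)) (ap fr (splitR x o))

/-- Binary map. -/
def map2 {X Y Z : Type} (f : X → Y → Z) (a : S X) (b : S Y) : S Z :=
  ap (mapS f a) b

/-- `fold⋆`: a step function of propositions holds everywhere. -/
def foldStar : S Prop → Prop := fold id (fun _ p q => p ∧ q)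

/-- Lifting of a relation to step functions: it holds pointwise everywhere. -/
def liftRel {X Y : Type} (R : X → Y → Prop) (f : S X) (g : S Y) : Prop :=
  foldStar (map2 R f g)

/-- The equivalence `≍` on step functions: the lifting of equality. -/
def equivS {X : Type} (f g : S X) : Prop := liftRel Eq f g

def foldSup : S ℚ → ℚ := fold id (fun _ x y => max x y)

def foldAffine : S ℚ → ℚ := fold id (fun o x y => o.1 * x + (1 - o.1) * y)

def normInf (f : S ℚ) : ℚ := foldSup (mapS (fun q => |q|) f)

def normOne (f : S ℚ) : ℚ := foldAffine (mapS (fun q => |q|) f)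

def dInf (f g : S ℚ) : ℚ := normInf (map2 (· - ·) f g)

def dOne (f g : S ℚ) : ℚ := normOne (map2 (· - ·) f g)

end S

open S


namespace MAux


variable {X Y Z : Type}

def lenL (l : List (ℚ × X)) : ℚ := (l.map Prod.fst).sum

def posL (l : List (ℚ × X)) : Prop := ∀ p ∈ l, 0 < p.1

def mapP (h : X → Y) (l : List (ℚ × X)) : List (ℚ × Y) :=
  l.map (fun p => (p.1, h p.2))

def sumA (l : List (ℚ × ℚ)) : ℚ := (l.map (fun p => p.1 * p.2)).sum

def takeLen (t : ℚ) : List (ℚ × X) → List (ℚ × X)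
  | [] => []
  | (a, x) :: s => if t ≤ 0 then [] else if t ≤ a then [(t, x)] else (a, x) :: takeLen (t - a) s

def dropLen (t : ℚ) : List (ℚ × X) → List (ℚ × X)
  | [] => []
  | (a, x) :: s => if t ≤ 0 then (a, x) :: s else if t < a then (a - t, x) :: s else dropLen (t - a) s

def apL : List (ℚ × (X → Y)) → List (ℚ × X) → List (ℚ × Y)
  | [], _ => []
  | (a, f) :: s, x => mapP f (takeLen a x) ++ apL s (dropLen a x)

def zipM (h : X → Y → Z) : List (ℚ × X) → List (ℚ × Y) → List (ℚ × Z)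
  | (a, x) :: s, (b, y) :: t =>
      if a < b then (a, h x y) :: zipM h s ((b - a, y) :: t)
      else if b < a then (b, h x y) :: zipM h ((a - b, x) :: s) t
      else (a, h x y) :: zipM h s t
  | _, _ => []
termination_by l m => l.length + m.length
decreasing_by all_goals simp_wf <;> omega

@[simp] lemma lenL_nil : lenL ([] : List (ℚ × X)) = 0 := rfl
@[simp] lemma lenL_cons (a : ℚ) (x : X) (s : List (ℚ × X)) :
    lenL ((a, x) :: s) = a + lenL s := rfl
@[simp] lemma lenL_append (l m : List (ℚ × X)) : lenL (l ++ m) = lenL l + lenL m := by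
  simp [lenL]

@[simp] lemma sumA_nil : sumA ([] : List (ℚ × ℚ)) = 0 := rfl
@[simp] lemma sumA_cons (a v : ℚ) (s : List (ℚ × ℚ)) :
    sumA ((a, v) :: s) = a * v + sumA s := rfl
@[simp] lemma sumA_append (l m : List (ℚ × ℚ)) : sumA (l ++ m) = sumA l + sumA m := by
  simp [sumA]

@[simp] lemma posL_nil : posL ([] : List (ℚ × X)) := by simp [posL]
lemma posL_cons {a : ℚ} {x : X} {s : List (ℚ × X)} :
    posL ((a, x) :: s) ↔ 0 < a ∧ posL s := by simp [posL]

lemma lenL_nonneg {l : List (ℚ × X)} (hl : posL l) : 0 ≤ lenL l := by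
  induction l with
  | nil => simp
  | cons p s ih =>
      obtain ⟨a, x⟩ := p
      rw [posL_cons] at hl
      have := ih hl.2
      simp; linarith [hl.1]

lemma posL_lenL_eq_zero {l : List (ℚ × X)} (hl : posL l) (h0 : lenL l = 0) : l = [] := by
  cases l with
  | nil => rfl
  | cons p s =>
      obtain ⟨a, x⟩ := p
      rw [posL_cons] at hl
      have := lenL_nonneg hl.2
      simp at h0
      linarith [hl.1]

@[simp] lemma takeLen_nil (t : ℚ) : takeLen t ([] : List (ℚ × X)) = [] := rfl
@[simp] lemma dropLen_nil (t : ℚ) : dropLen t ([] : List (ℚ × X)) = [] := rfl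

lemma takeLen_nonpos {t : ℚ} (ht : t ≤ 0) (l : List (ℚ × X)) : takeLen t l = [] := by
  cases l with
  | nil => rfl
  | cons p s => obtain ⟨a, x⟩ := p; simp [takeLen, ht]

lemma dropLen_nonpos {t : ℚ} (ht : t ≤ 0) (l : List (ℚ × X)) : dropLen t l = l := by
  cases l with
  | nil => rfl
  | cons p s => obtain ⟨a, x⟩ := p; simp [dropLen, ht]

lemma takeLen_full {l : List (ℚ × X)} (hl : posL l) : takeLen (lenL l) l = l := by
  induction l with
  | nil => rfl
  | cons p s ih =>
      obtain ⟨a, x⟩ := p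
      rw [posL_cons] at hl
      have hs := lenL_nonneg hl.2
      rcases eq_or_lt_of_le hs with h0 | h0
      · have : s = [] := posL_lenL_eq_zero hl.2 h0.symm
        subst this
        simp [takeLen, hl.1.le, not_le.2 hl.1]
      · have h1 : ¬ (a + lenL s ≤ 0) := by push_neg; linarith [hl.1]
        have h2 : ¬ (a + lenL s ≤ a) := by push_neg; linarith
        simp only [lenL_cons, takeLen, h1, h2, if_false]
        rw [show a + lenL s - a = lenL s by ring, ih hl.2]

lemma dropLen_full {l : List (ℚ × X)} (hl : posL l) : dropLen (lenL l) l = [] := by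
  induction l with
  | nil => rfl
  | cons p s ih =>
      obtain ⟨a, x⟩ := p
      rw [posL_cons] at hl
      have hs := lenL_nonneg hl.2
      have h1 : ¬ (a + lenL s ≤ 0) := by push_neg; linarith [hl.1]
      have h2 : ¬ (a + lenL s < a) := by push_neg; linarith
      simp only [lenL_cons, dropLen, h1, h2, if_false]
      rw [show a + lenL s - a = lenL s by ring, ih hl.2]

lemma takeLen_append_left {t : ℚ} {l : List (ℚ × X)} (m : List (ℚ × X))
    (hl : posL l) (h0 : 0 < t) (h1 : t ≤ lenL l) : takeLen t (l ++ m) = takeLen t l := by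
  induction l generalizing t with
  | nil => simp at h1; linarith
  | cons p s ih =>
      obtain ⟨a, x⟩ := p
      rw [posL_cons] at hl
      by_cases h2 : t ≤ a
      · simp [takeLen, not_le.2 h0, h2]
      · have h3 : ¬ t ≤ 0 := not_le.2 h0
        simp only [List.cons_append, takeLen, h3, h2, if_false, List.append_eq]
        rw [ih hl.2 (by linarith) (by simp only [lenL_cons] at h1; linarith)]

lemma takeLen_append_right {t : ℚ} {l : List (ℚ × X)} (m : List (ℚ × X))
    (hl : posL l) (h1 : lenL l < t) : takeLen t (l ++ m) = l ++ takeLen (t - lenL l) m := by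
  induction l generalizing t with
  | nil => simp
  | cons p s ih =>
      obtain ⟨a, x⟩ := p
      rw [posL_cons] at hl
      have hs := lenL_nonneg hl.2
      simp only [lenL_cons] at h1
      have h3 : ¬ t ≤ 0 := by push_neg; linarith [hl.1]
      have h4 : ¬ t ≤ a := by push_neg; linarith
      simp only [List.cons_append, takeLen, h3, h4, if_false, List.append_eq]
      rw [ih hl.2 (by linarith)]
      simp only [lenL_cons, List.cons_append]
      congr 2
      ring

lemma dropLen_append_left {t : ℚ} {l : List (ℚ × X)} (m : List (ℚ × X))
    (hl : posL l) (h1 : t ≤ lenL l) : dropLen t (l ++ m) = dropLen t l ++ m := by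
  induction l generalizing t with
  | nil =>
      simp at h1
      simp [dropLen_nonpos h1]
  | cons p s ih =>
      obtain ⟨a, x⟩ := p
      rw [posL_cons] at hl
      by_cases h2 : t ≤ 0
      · simp [dropLen_nonpos h2]
      · by_cases h3 : t < a
        · simp [dropLen, h2, h3]
        · simp only [List.cons_append, dropLen, h2, h3, if_false]
          exact ih hl.2 (by simp at h1; linarith)

lemma dropLen_append_right {t : ℚ} {l : List (ℚ × X)} (m : List (ℚ × X))
    (hl : posL l) (h1 : lenL l ≤ t) : dropLen t (l ++ m) = dropLen (t - lenL l) m := by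
  induction l generalizing t with
  | nil => simp
  | cons p s ih =>
      obtain ⟨a, x⟩ := p
      rw [posL_cons] at hl
      have hs := lenL_nonneg hl.2
      simp only [lenL_cons] at h1
      have h3 : ¬ t ≤ 0 := by push_neg; linarith [hl.1]
      have h4 : ¬ t < a := by push_neg; linarith
      simp only [List.cons_append, dropLen, h3, h4, if_false, List.append_eq]
      rw [ih hl.2 (by linarith)]
      congr 1
      simp; ring

lemma dropLen_dropLen {s t : ℚ} (hs : 0 ≤ s) (ht : 0 ≤ t) (l : List (ℚ × X)) :
    dropLen t (dropLen s l) = dropLen (t + s) l := by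
  induction l generalizing s t with
  | nil => simp
  | cons p r ih =>
      obtain ⟨a, x⟩ := p
      rcases eq_or_lt_of_le hs with h0 | h0
      · rw [dropLen_nonpos (le_of_eq h0.symm), ← h0, add_zero]
      · rcases eq_or_lt_of_le ht with h0t | h0t
        · rw [dropLen_nonpos (le_of_eq h0t.symm), ← h0t, zero_add]
        · by_cases h1 : s < a
          · simp only [dropLen, not_le.2 h0, if_false, h1, if_true]
            by_cases h3 : t < a - s
            · simp only [dropLen, not_le.2 h0t, if_false, h3, if_true,
                not_le.2 (show (0:ℚ) < t + s by linarith), if_false,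
                show t + s < a by linarith, if_true]
              rw [show a - s - t = a - (t + s) by ring]
            · simp only [dropLen, not_le.2 h0t, if_false, h3, if_false,
                not_le.2 (show (0:ℚ) < t + s by linarith), if_false,
                not_lt.2 (show a ≤ t + s by linarith), if_false]
              rw [show t - (a - s) = t + s - a by ring]
          · simp only [dropLen, not_le.2 h0, if_false, h1, if_false,
              not_le.2 (show (0:ℚ) < t + s by linarith), if_false,
              not_lt.2 (show a ≤ t + s by linarith), if_false]
            rw [ih (by linarith) ht, show t + (s - a) = t + s - a by ring]

lemma takeLen_takeLen {a T : ℚ} (h : a ≤ T) (l : List (ℚ × X)) :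
    takeLen a (takeLen T l) = takeLen a l := by
  induction l generalizing a T with
  | nil => simp
  | cons p s ih =>
      obtain ⟨b, y⟩ := p
      by_cases hT : T ≤ 0
      · rw [takeLen_nonpos hT, takeLen_nil, takeLen_nonpos (by linarith)]
      · by_cases ha : a ≤ 0
        · rw [takeLen_nonpos ha, takeLen_nonpos ha]
        · by_cases h1 : T ≤ b
          · simp only [takeLen, hT, if_false, h1, if_true]
            simp [takeLen, ha, h, le_trans h h1]
          · simp only [takeLen, hT, if_false, h1, if_false]
            by_cases h2 : a ≤ b
            · simp [takeLen, ha, h2]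
            · simp only [takeLen, ha, if_false, h2, if_false]
              rw [ih (by linarith)]

lemma dropLen_takeLen {a T : ℚ} (ha : 0 ≤ a) (l : List (ℚ × X)) :
    dropLen a (takeLen T l) = takeLen (T - a) (dropLen a l) := by
  induction l generalizing a T with
  | nil => simp
  | cons p s ih =>
      obtain ⟨b, y⟩ := p
      by_cases hT : T ≤ 0
      · rw [takeLen_nonpos hT, dropLen_nil, takeLen_nonpos (by linarith)]
      · rcases eq_or_lt_of_le ha with h0 | h0
        · rw [dropLen_nonpos (le_of_eq h0.symm), dropLen_nonpos (le_of_eq h0.symm), ← h0, sub_zero]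
        · by_cases h1 : T ≤ b
          · -- takeLen T = [(T,y)]
            simp only [takeLen, hT, if_false, h1, if_true]
            by_cases h2 : a < T
            · simp only [dropLen, not_le.2 h0, if_false, h2, if_true]
              by_cases h3 : a < b
              · simp only [dropLen, not_le.2 h0, if_false, h3, if_true]
                simp [takeLen, not_le.2 (show (0:ℚ) < T - a by linarith), show T - a ≤ b - a by linarith]
              · exfalso; linarith
            · push_neg at h2
              rw [takeLen_nonpos (by linarith : T - a ≤ 0)]
              simp [dropLen, not_le.2 h0, not_lt.2 h2]
          · push_neg at h1
            simp only [takeLen, hT, if_false, not_le.2 h1, if_false]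
            by_cases h3 : a < b
            · simp only [dropLen, not_le.2 h0, if_false, h3, if_true]
              simp only [takeLen, not_le.2 (show (0:ℚ) < T - a by linarith), if_false,
                show ¬ T - a ≤ b - a by push_neg; linarith, if_false]
              rw [show T - a - (b - a) = T - b by ring]
            · push_neg at h3
              simp only [dropLen, not_le.2 h0, if_false, not_lt.2 h3, if_false]
              rw [ih (by linarith)]
              rw [show T - b - (a - b) = T - a by ring]

@[simp] lemma mapP_nil (h : X → Y) : mapP h ([] : List (ℚ × X)) = [] := rfl
@[simp] lemma mapP_cons (h : X → Y) (a : ℚ) (x : X) (s : List (ℚ × X)) :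
    mapP h ((a, x) :: s) = (a, h x) :: mapP h s := rfl
@[simp] lemma apL_nil (m : List (ℚ × X)) : apL ([] : List (ℚ × (X → Y))) m = [] := rfl
@[simp] lemma apL_cons (a : ℚ) (f : X → Y) (s : List (ℚ × (X → Y))) (m : List (ℚ × X)) :
    apL ((a, f) :: s) m = mapP f (takeLen a m) ++ apL s (dropLen a m) := rfl

@[simp] lemma apL_nil_right (l : List (ℚ × (X → Y))) : apL l ([] : List (ℚ × X)) = [] := by
  induction l with
  | nil => rfl
  | cons p s ih => obtain ⟨a, f⟩ := p; simp [ih]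

lemma lenL_mapP (h : X → Y) (l : List (ℚ × X)) : lenL (mapP h l) = lenL l := by
  induction l with
  | nil => rfl
  | cons p s ih => obtain ⟨a, x⟩ := p; simp [ih]

lemma posL_mapP {h : X → Y} {l : List (ℚ × X)} (hl : posL l) : posL (mapP h l) := by
  induction l with
  | nil => simp
  | cons p s ih =>
      obtain ⟨a, x⟩ := p
      rw [posL_cons] at hl
      rw [mapP_cons, posL_cons]
      exact ⟨hl.1, ih hl.2⟩

lemma apL_append (l₁ l₂ : List (ℚ × (X → Y))) (m : List (ℚ × X)) (h₁ : posL l₁) :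
    apL (l₁ ++ l₂) m = apL l₁ m ++ apL l₂ (dropLen (lenL l₁) m) := by
  induction l₁ generalizing m with
  | nil => simp [dropLen_nonpos (le_refl (0:ℚ))]
  | cons p s ih =>
      obtain ⟨a, f⟩ := p
      rw [posL_cons] at h₁
      have hs := lenL_nonneg h₁.2
      simp only [List.cons_append, apL_cons, lenL_cons]
      rw [ih (dropLen a m) h₁.2, dropLen_dropLen h₁.1.le hs,
        show lenL s + a = a + lenL s by ring, List.append_assoc]

lemma apL_trunc (l : List (ℚ × (X → Y))) (m : List (ℚ × X)) (hl : posL l) :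
    apL l (takeLen (lenL l) m) = apL l m := by
  induction l generalizing m with
  | nil => rfl
  | cons p s ih =>
      obtain ⟨a, f⟩ := p
      rw [posL_cons] at hl
      have hs := lenL_nonneg hl.2
      simp only [apL_cons, lenL_cons]
      rw [takeLen_takeLen (show a ≤ a + lenL s by linarith),
        dropLen_takeLen hl.1.le, show a + lenL s - a = lenL s by ring, ih _ hl.2]

@[simp] lemma zipM_nil_left (h : X → Y → Z) (m : List (ℚ × Y)) : zipM h [] m = [] := by
  cases m <;> simp [zipM]

@[simp] lemma zipM_nil_right (h : X → Y → Z) (l : List (ℚ × X)) : zipM h l [] = [] := by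
  cases l <;> simp [zipM]

lemma zipM_cons (h : X → Y → Z) (a b : ℚ) (x : X) (y : Y) (s : List (ℚ × X)) (t : List (ℚ × Y)) :
    zipM h ((a, x) :: s) ((b, y) :: t) =
      if a < b then (a, h x y) :: zipM h s ((b - a, y) :: t)
      else if b < a then (b, h x y) :: zipM h ((a - b, x) :: s) t
      else (a, h x y) :: zipM h s t := by
  simp [zipM]

lemma apL_zipM (h : X → Y → Z) :
    ∀ (n : ℕ) (l : List (ℚ × X)) (m : List (ℚ × Y)), l.length + m.length ≤ n →
      posL l → posL m → apL (mapP h l) m = zipM h l m := by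
  intro n
  induction n with
  | zero =>
      intro l m hn _ _
      have : l = [] := by cases l <;> simp_all
      subst this; simp
  | succ n ih =>
      intro l m hn hl hm
      cases l with
      | nil => simp
      | cons p s =>
          obtain ⟨a, x⟩ := p
          cases m with
          | nil => simp
          | cons q t =>
              obtain ⟨b, y⟩ := q
              rw [posL_cons] at hl hm
              rw [zipM_cons, mapP_cons, apL_cons]
              rcases lt_trichotomy a b with hab | hab | hab
              · rw [if_pos hab]
                have h1 : takeLen a ((b, y) :: t) = [(a, y)] := by
                  simp [takeLen, not_le.2 hl.1, hab.le]
                have h2 : dropLen a ((b, y) :: t) = (b - a, y) :: t := by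
                  simp [dropLen, not_le.2 hl.1, hab]
                rw [h1, h2, ih s ((b - a, y) :: t) (by simp at hn ⊢; omega) hl.2
                  (posL_cons.2 ⟨by linarith, hm.2⟩)]
                rfl
              · subst hab
                rw [if_neg (lt_irrefl a), if_neg (lt_irrefl a)]
                have h1 : takeLen a ((a, y) :: t) = [(a, y)] := by
                  simp [takeLen, not_le.2 hl.1]
                have h2 : dropLen a ((a, y) :: t) = t := by
                  simp [dropLen, not_le.2 hl.1, lt_irrefl a, dropLen_nonpos (le_refl (0:ℚ))]
                rw [h1, h2, ih s t (by simp at hn ⊢; omega) hl.2 hm.2]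
                rfl
              · rw [if_neg (not_lt.2 hab.le), if_pos hab]
                have h1 : takeLen a ((b, y) :: t) = (b, y) :: takeLen (a - b) t := by
                  simp [takeLen, not_le.2 hl.1, not_le.2 hab]
                have h2 : dropLen a ((b, y) :: t) = dropLen (a - b) t := by
                  simp [dropLen, not_le.2 hl.1, not_lt.2 hab.le]
                rw [h1, h2]
                have h3 := ih ((a - b, x) :: s) t (by simp at hn ⊢; omega)
                  (posL_cons.2 ⟨by linarith, hl.2⟩) hm.2
                rw [mapP_cons, apL_cons] at h3
                rw [← h3]
                rfl
  
lemma zipM_comm (h : X → Y → Z) :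
    ∀ (n : ℕ) (l : List (ℚ × X)) (m : List (ℚ × Y)), l.length + m.length ≤ n →
      zipM h l m = zipM (fun b a => h a b) m l := by
  intro n
  induction n with
  | zero =>
      intro l m hn
      have : l = [] := by cases l <;> simp_all
      subst this; simp
  | succ n ih =>
      intro l m hn
      cases l with
      | nil => simp
      | cons p s =>
          obtain ⟨a, x⟩ := p
          cases m with
          | nil => simp
          | cons q t =>
              obtain ⟨b, y⟩ := q
              rw [zipM_cons, zipM_cons]
              rcases lt_trichotomy a b with hab | hab | hab
              · rw [if_pos hab, if_neg (not_lt.2 hab.le), if_pos hab,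
                  ih s ((b - a, y) :: t) (by simp at hn ⊢; omega)]
              · subst hab
                rw [if_neg (lt_irrefl a), if_neg (lt_irrefl a), if_neg (lt_irrefl a),
                  if_neg (lt_irrefl a), ih s t (by simp at hn ⊢; omega)]
              · rw [if_neg (not_lt.2 hab.le), if_pos hab, if_pos hab,
                  ih ((a - b, x) :: s) t (by simp at hn ⊢; omega)]

lemma zipM_pair (h : X → Y → Z) :
    ∀ (n : ℕ) (l : List (ℚ × X)) (m : List (ℚ × Y)), l.length + m.length ≤ n →
      zipM h l m = mapP (fun p => h p.1 p.2) (zipM Prod.mk l m) := by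
  intro n
  induction n with
  | zero =>
      intro l m hn
      have : l = [] := by cases l <;> simp_all
      subst this; simp
  | succ n ih =>
      intro l m hn
      cases l with
      | nil => simp
      | cons p s =>
          obtain ⟨a, x⟩ := p
          cases m with
          | nil => simp
          | cons q t =>
              obtain ⟨b, y⟩ := q
              rw [zipM_cons, zipM_cons]
              rcases lt_trichotomy a b with hab | hab | hab
              · rw [if_pos hab, if_pos hab, mapP_cons,
                  ih s ((b - a, y) :: t) (by simp at hn ⊢; omega)]
              · subst hab
                rw [if_neg (lt_irrefl a), if_neg (lt_irrefl a), if_neg (lt_irrefl a),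
                  if_neg (lt_irrefl a), mapP_cons, ih s t (by simp at hn ⊢; omega)]
              · rw [if_neg (not_lt.2 hab.le), if_neg (not_lt.2 hab.le), if_pos hab, if_pos hab,
                  mapP_cons, ih ((a - b, x) :: s) t (by simp at hn ⊢; omega)]

lemma posL_zipM (h : X → Y → Z) :
    ∀ (n : ℕ) (l : List (ℚ × X)) (m : List (ℚ × Y)), l.length + m.length ≤ n →
      posL l → posL m → posL (zipM h l m) := by
  intro n
  induction n with
  | zero =>
      intro l m hn _ _
      have : l = [] := by cases l <;> simp_all
      subst this; simp
  | succ n ih =>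
      intro l m hn hl hm
      cases l with
      | nil => simp
      | cons p s =>
          obtain ⟨a, x⟩ := p
          cases m with
          | nil => simp
          | cons q t =>
              obtain ⟨b, y⟩ := q
              rw [posL_cons] at hl hm
              rw [zipM_cons]
              rcases lt_trichotomy a b with hab | hab | hab
              · rw [if_pos hab]
                exact posL_cons.2 ⟨hl.1, ih s _ (by simp at hn ⊢; omega) hl.2
                  (posL_cons.2 ⟨by linarith, hm.2⟩)⟩
              · subst hab
                rw [if_neg (lt_irrefl a), if_neg (lt_irrefl a)]
                exact posL_cons.2 ⟨hl.1, ih s t (by simp at hn ⊢; omega) hl.2 hm.2⟩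
              · rw [if_neg (not_lt.2 hab.le), if_pos hab]
                exact posL_cons.2 ⟨hm.1, ih ((a - b, x) :: s) t (by simp at hn ⊢; omega)
                  (posL_cons.2 ⟨by linarith, hl.2⟩) hm.2⟩

lemma zipM_diag (h : X → X → Z) (l : List (ℚ × X)) :
    zipM h l l = mapP (fun x => h x x) l := by
  induction l with
  | nil => simp
  | cons p s ih =>
      obtain ⟨a, x⟩ := p
      rw [zipM_cons, if_neg (lt_irrefl a), if_neg (lt_irrefl a), mapP_cons, ih]

lemma sumA_nonneg {l : List (ℚ × ℚ)} (hl : posL l) (hv : ∀ p ∈ l, 0 ≤ p.2) :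
    0 ≤ sumA l := by
  induction l with
  | nil => simp
  | cons p s ih =>
      obtain ⟨a, v⟩ := p
      rw [posL_cons] at hl
      have h1 := hv (a, v) (by simp)
      have h2 := ih hl.2 (fun p hp => hv p (by simp [hp]))
      simp only [sumA_cons]
      nlinarith [hl.1]

lemma sumA_zero {l : List (ℚ × ℚ)} (hv : ∀ p ∈ l, p.2 = 0) : sumA l = 0 := by
  induction l with
  | nil => simp
  | cons p s ih =>
      obtain ⟨a, v⟩ := p
      have h1 : v = 0 := hv (a, v) (by simp)
      simp only [sumA_cons, h1, mul_zero, zero_add]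
      exact ih (fun p hp => hv p (by simp [hp]))

lemma sumA_eq_zero_iff (l : List (ℚ × ℚ)) : posL l → (∀ p ∈ l, 0 ≤ p.2) →
    sumA l = 0 → ∀ p ∈ l, p.2 = 0 := by
  induction l with
  | nil => simp
  | cons p s ih =>
      intro hl hv h0
      obtain ⟨a, v⟩ := p
      rw [posL_cons] at hl
      have h1 : 0 ≤ v := hv (a, v) (by simp)
      have h2 : 0 ≤ sumA s := sumA_nonneg hl.2 (fun p hp => hv p (by simp [hp]))
      simp only [sumA_cons] at h0
      have hav : a * v = 0 := by nlinarith [hl.1]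
      have hv0 : v = 0 := by
        rcases mul_eq_zero.1 hav with h | h
        · exact absurd h (ne_of_gt hl.1)
        · exact h
      intro p hp
      rcases List.mem_cons.1 hp with rfl | hp
      · exact hv0
      · exact ih hl.2 (fun p hp => hv p (by simp [hp])) (by linarith) p hp

/-- Splitting the head segment does not change the weighted sum of a zip. -/
lemma sumA_zipM_split (h : X → Y → ℚ) (x : X) (s : List (ℚ × X)) :
    ∀ (m : List (ℚ × Y)) (a₁ a₂ : ℚ), 0 < a₁ → 0 < a₂ →
      sumA (zipM h ((a₁ + a₂, x) :: s) m) = sumA (zipM h ((a₁, x) :: (a₂, x) :: s) m) := by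
  intro m
  induction m with
  | nil => simp
  | cons q t ih =>
      intro a₁ a₂ h₁ h₂
      obtain ⟨b, y⟩ := q
      rcases lt_trichotomy b a₁ with hb | hb | hb
      · rw [zipM_cons, if_neg (by push_neg; linarith), if_pos (by linarith),
          zipM_cons, if_neg (by push_neg; linarith), if_pos hb]
        simp only [sumA_cons]
        rw [show a₁ + a₂ - b = (a₁ - b) + a₂ by ring, ih (a₁ - b) a₂ (by linarith) h₂]
      · rw [zipM_cons, if_neg (by push_neg; linarith), if_pos (by linarith),
          zipM_cons, if_neg (by rw [hb]; exact lt_irrefl _),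
          if_neg (by rw [hb]; exact lt_irrefl _)]
        simp only [sumA_cons]
        rw [hb, show a₁ + a₂ - a₁ = a₂ by ring]
      · rcases lt_trichotomy b (a₁ + a₂) with hb2 | hb2 | hb2
        · rw [zipM_cons, if_neg (by push_neg; linarith), if_pos hb2,
            zipM_cons, if_pos hb, zipM_cons,
            if_neg (by push_neg; linarith), if_pos (by linarith)]
          simp only [sumA_cons]
          rw [show a₁ + a₂ - b = a₂ - (b - a₁) by ring]
          ring
        · rw [zipM_cons, if_neg (by rw [hb2]; exact lt_irrefl _),
            if_neg (by rw [hb2]; exact lt_irrefl _),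
            zipM_cons, if_pos hb, zipM_cons, if_neg (by push_neg; linarith),
            if_neg (by push_neg; linarith)]
          simp only [sumA_cons]
          ring
        · rw [zipM_cons, if_pos hb2, zipM_cons, if_pos hb, zipM_cons,
            if_pos (by linarith)]
          simp only [sumA_cons]
          rw [show b - a₁ - a₂ = b - (a₁ + a₂) by ring]
          ring

def consP (d : ℚ) (x : X) (s : List (ℚ × X)) : List (ℚ × X) :=
  if 0 < d then (d, x) :: s else s

lemma posL_consP {d : ℚ} {x : X} {s : List (ℚ × X)} (hs : posL s) : posL (consP d x s) := by
  unfold consP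
  split_ifs with hd
  · exact posL_cons.2 ⟨hd, hs⟩
  · exact hs

lemma lenL_consP {d : ℚ} (hd : 0 ≤ d) (x : X) (s : List (ℚ × X)) :
    lenL (consP d x s) = d + lenL s := by
  unfold consP
  split_ifs with h
  · simp
  · have : d = 0 := le_antisymm (not_lt.1 h) hd
    simp [this]

lemma length_consP (d : ℚ) (x : X) (s : List (ℚ × X)) :
    (consP d x s).length ≤ s.length + 1 := by
  unfold consP; split_ifs <;> simp

lemma length_consP_zero {d : ℚ} (hd : ¬ 0 < d) (x : X) (s : List (ℚ × X)) :
    (consP d x s).length = s.length := by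
  simp [consP, hd]

lemma consP_zero {d : ℚ} (hd : d = 0) (x : X) (s : List (ℚ × X)) : consP d x s = s := by
  simp [consP, hd]

lemma consP_pos {d : ℚ} (hd : 0 < d) (x : X) (s : List (ℚ × X)) :
    consP d x s = (d, x) :: s := by
  simp [consP, hd]

lemma head_decomp (h : X → Y → ℚ) (a b μ : ℚ) (x : X) (y : Y)
    (s : List (ℚ × X)) (t : List (ℚ × Y))
    (h1 : 0 < μ) (h2 : μ ≤ a) (h3 : μ ≤ b) :
    sumA (zipM h ((a, x) :: s) ((b, y) :: t)) =
      μ * h x y + sumA (zipM h (consP (a - μ) x s) (consP (b - μ) y t)) := by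
  rcases eq_or_lt_of_le h2 with ha | ha
  · rcases eq_or_lt_of_le h3 with hb | hb
    · rw [consP_zero (show a - μ = 0 by rw [← ha]; ring) x s,
        consP_zero (show b - μ = 0 by rw [← hb]; ring) y t,
        zipM_cons, if_neg (show ¬ a < b by rw [← ha, ← hb]; exact lt_irrefl _),
        if_neg (show ¬ b < a by rw [← ha, ← hb]; exact lt_irrefl _), sumA_cons, ← ha]
    · rw [consP_zero (show a - μ = 0 by rw [← ha]; ring) x s,
        consP_pos (show (0:ℚ) < b - μ by linarith) y t,
        zipM_cons, if_pos (show a < b by rw [← ha]; exact hb), sumA_cons, ← ha]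
  · rcases eq_or_lt_of_le h3 with hb | hb
    · rw [consP_zero (show b - μ = 0 by rw [← hb]; ring) y t,
        consP_pos (show (0:ℚ) < a - μ by linarith) x s,
        zipM_cons, if_neg (show ¬ a < b by rw [← hb]; push_neg; linarith),
        if_pos (show b < a by rw [← hb]; exact ha), sumA_cons, ← hb]
    · have hsplit := sumA_zipM_split h x s ((b, y) :: t) μ (a - μ) h1 (by linarith)
      rw [show μ + (a - μ) = a by ring] at hsplit
      rw [consP_pos (show (0:ℚ) < a - μ by linarith) x s,
        consP_pos (show (0:ℚ) < b - μ by linarith) y t, hsplit,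
        zipM_cons, if_pos (show μ < b by linarith), sumA_cons]

lemma triangle_zip :
    ∀ (n : ℕ) (u v w : List (ℚ × ℚ)), u.length + v.length + w.length ≤ n →
      posL u → posL v → posL w → lenL u = lenL v → lenL u = lenL w →
      sumA (zipM (fun p q => |p - q|) u w) ≤
        sumA (zipM (fun p q => |p - q|) u v) + sumA (zipM (fun p q => |p - q|) v w) := by
  intro n
  induction n with
  | zero =>
      intro u v w hn _ _ _ _ _
      cases u <;> cases v <;> cases w <;> simp_all
  | succ n ih =>
      intro u v w hn hu hv hw huv huw
      cases u with
      | nil =>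
          have hv0 : v = [] := posL_lenL_eq_zero hv (by simpa using huv.symm)
          have hw0 : w = [] := posL_lenL_eq_zero hw (by simpa using huw.symm)
          subst hv0; subst hw0; simp
      | cons p u' =>
          obtain ⟨a, x⟩ := p
          rw [posL_cons] at hu
          cases v with
          | nil =>
              exfalso
              have := lenL_nonneg hu.2
              simp at huv
              linarith [hu.1]
          | cons q v' =>
              obtain ⟨b, y⟩ := q
              rw [posL_cons] at hv
              cases w with
              | nil =>
                  exfalso
                  have := lenL_nonneg hu.2
                  simp at huw
                  linarith [hu.1]
              | cons r w' =>
                  obtain ⟨c, z⟩ := r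
                  rw [posL_cons] at hw
                  set μ := min a (min b c) with hμdef
                  have hμa : μ ≤ a := min_le_left _ _
                  have hμb : μ ≤ b := le_trans (min_le_right _ _) (min_le_left _ _)
                  have hμc : μ ≤ c := le_trans (min_le_right _ _) (min_le_right _ _)
                  have hμ0 : 0 < μ := lt_min hu.1 (lt_min hv.1 hw.1)
                  rw [head_decomp _ a c μ x z u' w' hμ0 hμa hμc,
                      head_decomp _ a b μ x y u' v' hμ0 hμa hμb,
                      head_decomp _ b c μ y z v' w' hμ0 hμb hμc]
                  have hch : μ = a ∨ μ = b ∨ μ = c := by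
                    rw [hμdef]
                    rcases min_cases a (min b c) with ⟨h1, _⟩ | ⟨h1, _⟩
                    · left; exact h1
                    · right
                      rcases min_cases b c with ⟨h2, _⟩ | ⟨h2, _⟩
                      · left; rw [h1, h2]
                      · right; rw [h1, h2]
                  have hlen : (consP (a - μ) x u').length + (consP (b - μ) y v').length +
                      (consP (c - μ) z w').length ≤ n := by
                    have l1 := length_consP (a - μ) x u'
                    have l2 := length_consP (b - μ) y v'
                    have l3 := length_consP (c - μ) z w'
                    simp only [List.length_cons] at hn
                    rcases hch with hch | hch | hch
                    · have := length_consP_zero (show ¬ 0 < a - μ by rw [not_lt]; linarith) x u'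
                      omega
                    · have := length_consP_zero (show ¬ 0 < b - μ by rw [not_lt]; linarith) y v'
                      omega
                    · have := length_consP_zero (show ¬ 0 < c - μ by rw [not_lt]; linarith) z w'
                      omega
                  have key := ih (consP (a - μ) x u') (consP (b - μ) y v') (consP (c - μ) z w')
                    hlen (posL_consP hu.2) (posL_consP hv.2) (posL_consP hw.2)
                    (by
                      rw [lenL_consP (by linarith) x u', lenL_consP (by linarith) y v']
                      simp only [lenL_cons] at huv
                      linarith)
                    (by
                      rw [lenL_consP (by linarith) x u', lenL_consP (by linarith) z w']
                      simp only [lenL_cons] at huw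
                      linarith)
                  have habs : |x - z| ≤ |x - y| + |y - z| := abs_sub_le x y z
                  nlinarith [mul_le_mul_of_nonneg_left habs hμ0.le]


lemma posL_append {l m : List (ℚ × X)} : posL (l ++ m) ↔ posL l ∧ posL m := by
  constructor
  · intro h
    exact ⟨fun p hp => h p (List.mem_append.2 (Or.inl hp)),
           fun p hp => h p (List.mem_append.2 (Or.inr hp))⟩
  · rintro ⟨h1, h2⟩ p hp
    rcases List.mem_append.1 hp with hp | hp
    · exact h1 p hp
    · exact h2 p hp

lemma mapP_append (h : X → Y) (l m : List (ℚ × X)) :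
    mapP h (l ++ m) = mapP h l ++ mapP h m := by
  simp [mapP]

/-! ### Bridge between step functions and segment lists -/

def toL {X : Type} (c : ℚ) : S X → List (ℚ × X)
  | .const x => [(c, x)]
  | .glue o f g => toL (c * o.1) f ++ toL (c * (1 - o.1)) g

lemma lenL_toL {X : Type} (c : ℚ) (x : S X) : lenL (toL c x) = c := by
  induction x generalizing c with
  | const x => simp [toL]
  | glue o f g ihf ihg => simp [toL, ihf, ihg]; ring

lemma posL_toL {X : Type} {c : ℚ} (hc : 0 < c) (x : S X) : posL (toL c x) := by
  induction x generalizing c with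
  | const x => simp [toL, posL, hc]
  | glue o f g ihf ihg =>
      have h1 := o.2.1
      have h2 := o.2.2
      exact posL_append.2 ⟨ihf (by nlinarith), ihg (by nlinarith)⟩

lemma toL_mapS {X Y : Type} (h : X → Y) (c : ℚ) (x : S X) :
    toL c (mapS h x) = mapP h (toL c x) := by
  induction x generalizing c with
  | const x => simp [toL, mapS, mapP]
  | glue o f g ihf ihg => simp [toL, mapS, mapP_append, ihf, ihg]

lemma sumA_toL (c : ℚ) (x : S ℚ) : sumA (toL c x) = c * foldAffine x := by
  induction x generalizing c with
  | const x => simp [toL, foldAffine, fold]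
  | glue o f g ihf ihg =>
      simp only [toL, sumA_append, ihf, ihg]
      show _ = c * foldAffine (S.glue o f g)
      simp only [foldAffine, fold]
      ring

lemma foldStar_toL (c : ℚ) (x : S Prop) : foldStar x ↔ ∀ p ∈ toL c x, p.2 := by
  induction x generalizing c with
  | const P => simp [toL, foldStar, fold]
  | glue o f g ihf ihg =>
      show foldStar f ∧ foldStar g ↔ _
      rw [ihf (c * o.1), ihg (c * (1 - o.1))]
      show _ ↔ ∀ p ∈ toL (c * o.1) f ++ toL (c * (1 - o.1)) g, p.2
      constructor
      · rintro ⟨h1, h2⟩ p hp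
        rcases List.mem_append.1 hp with hp | hp
        · exact h1 p hp
        · exact h2 p hp
      · intro hh
        exact ⟨fun p hp => hh p (List.mem_append.2 (Or.inl hp)),
               fun p hp => hh p (List.mem_append.2 (Or.inr hp))⟩

lemma toL_splitL {X : Type} (g : S X) :
    ∀ (c : ℚ) (a : OO), 0 < c →
      toL (c * a.1) (splitL g a) = takeLen (c * a.1) (toL c g) := by
  induction g with
  | const x =>
      intro c a hc
      have h1 := a.2.1
      have h2 := a.2.2
      have e1 : ¬ c * a.1 ≤ 0 := by push_neg; nlinarith
      have e2 : c * a.1 ≤ c := by nlinarith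
      simp [splitL, toL, takeLen, e1, e2]
  | glue o f g ihf ihg =>
      intro c a hc
      have ho1 := o.2.1
      have ho2 := o.2.2
      have ha1 := a.2.1
      have ha2 := a.2.2
      have hpf : posL (toL (c * o.1) f) := posL_toL (by nlinarith) f
      have hlen : lenL (toL (c * o.1) f) = c * o.1 := lenL_toL _ _
      rcases lt_trichotomy a.1 o.1 with h | h | h
      · have hs : splitL (S.glue o f g) a = splitL f (divO a o h) := by
          simp [splitL, h]
        rw [hs]
        have e1 : c * a.1 = (c * o.1) * (divO a o h).1 := by
          show c * a.1 = (c * o.1) * (a.1 / o.1)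
          field_simp
        rw [e1, ihf (c * o.1) (divO a o h) (by nlinarith), ← e1]
        show _ = takeLen (c * a.1) (toL (c * o.1) f ++ toL (c * (1 - o.1)) g)
        rw [takeLen_append_left _ hpf (by nlinarith) (by rw [hlen]; nlinarith)]
      · have hs : splitL (S.glue o f g) a = f := by
          simp [splitL, h, lt_irrefl]
        rw [hs]
        show _ = takeLen (c * a.1) (toL (c * o.1) f ++ toL (c * (1 - o.1)) g)
        have hfull := takeLen_full hpf
        rw [hlen] at hfull
        rw [takeLen_append_left _ hpf (by nlinarith) (by rw [hlen, h]), h, hfull]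
      · have hs : splitL (S.glue o f g) a = S.glue (divO o a h) f (splitL g (subO a o h)) := by
          simp [splitL, h, asymm h]
        rw [hs]
        show toL ((c * a.1) * (divO o a h).1) f ++
            toL ((c * a.1) * (1 - (divO o a h).1)) (splitL g (subO a o h)) = _
        have e1 : (c * a.1) * (divO o a h).1 = c * o.1 := by
          show (c * a.1) * (o.1 / a.1) = c * o.1
          field_simp
        have e2 : (c * a.1) * (1 - (divO o a h).1) = (c * (1 - o.1)) * (subO a o h).1 := by
          show (c * a.1) * (1 - o.1 / a.1) = (c * (1 - o.1)) * ((a.1 - o.1) / (1 - o.1))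
          have hne : a.1 ≠ 0 := ne_of_gt ha1
          have hne2 : (1:ℚ) - o.1 ≠ 0 := by linarith
          field_simp
        have hne2 : (1:ℚ) - o.1 ≠ 0 := by linarith
        have e3 : (c * (1 - o.1)) * (subO a o h).1 = c * a.1 - c * o.1 := by
          show (c * (1 - o.1)) * ((a.1 - o.1) / (1 - o.1)) = c * a.1 - c * o.1
          field_simp
        rw [e1, e2, ihg (c * (1 - o.1)) (subO a o h) (by nlinarith), e3]
        show _ = takeLen (c * a.1) (toL (c * o.1) f ++ toL (c * (1 - o.1)) g)
        rw [takeLen_append_right _ hpf (by rw [hlen]; nlinarith), hlen]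

lemma toL_splitR {X : Type} (g : S X) :
    ∀ (c : ℚ) (a : OO), 0 < c →
      toL (c * (1 - a.1)) (splitR g a) = dropLen (c * a.1) (toL c g) := by
  induction g with
  | const x =>
      intro c a hc
      have h1 := a.2.1
      have h2 := a.2.2
      have e1 : ¬ c * a.1 ≤ 0 := by push_neg; nlinarith
      have e2 : c * a.1 < c := by nlinarith
      have e3 : c - c * a.1 = c * (1 - a.1) := by ring
      simp [splitR, toL, dropLen, e1, e2, e3]
  | glue o f g ihf ihg =>
      intro c a hc
      have ho1 := o.2.1
      have ho2 := o.2.2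
      have ha1 := a.2.1
      have ha2 := a.2.2
      have hpf : posL (toL (c * o.1) f) := posL_toL (by nlinarith) f
      have hlen : lenL (toL (c * o.1) f) = c * o.1 := lenL_toL _ _
      rcases lt_trichotomy a.1 o.1 with h | h | h
      · have hs : splitR (S.glue o f g) a =
            S.glue (subO o a h) (splitR f (divO a o h)) g := by
          simp [splitR, h]
        rw [hs]
        show toL ((c * (1 - a.1)) * (subO o a h).1) (splitR f (divO a o h)) ++
            toL ((c * (1 - a.1)) * (1 - (subO o a h).1)) g = _
        have hne : (1:ℚ) - a.1 ≠ 0 := by linarith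
        have hne2 : o.1 ≠ 0 := ne_of_gt ho1
        have e1 : (c * (1 - a.1)) * (subO o a h).1 = (c * o.1) * (1 - (divO a o h).1) := by
          show (c * (1 - a.1)) * ((o.1 - a.1) / (1 - a.1)) = (c * o.1) * (1 - a.1 / o.1)
          field_simp
        have e2 : (c * (1 - a.1)) * (1 - (subO o a h).1) = c * (1 - o.1) := by
          show (c * (1 - a.1)) * (1 - (o.1 - a.1) / (1 - a.1)) = c * (1 - o.1)
          field_simp
          ring
        have e3 : (c * o.1) * (divO a o h).1 = c * a.1 := by
          show (c * o.1) * (a.1 / o.1) = c * a.1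
          field_simp
        rw [e1, e2, ihf (c * o.1) (divO a o h) (by nlinarith), e3]
        show _ = dropLen (c * a.1) (toL (c * o.1) f ++ toL (c * (1 - o.1)) g)
        rw [dropLen_append_left _ hpf (by rw [hlen]; nlinarith)]
      · have hs : splitR (S.glue o f g) a = g := by
          simp [splitR, h, lt_irrefl]
        rw [hs]
        show _ = dropLen (c * a.1) (toL (c * o.1) f ++ toL (c * (1 - o.1)) g)
        rw [dropLen_append_right _ hpf (by rw [hlen, h]), hlen, h, sub_self,
          dropLen_nonpos (le_refl 0)]
      · have hs : splitR (S.glue o f g) a = splitR g (subO a o h) := by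
          simp [splitR, h, asymm h]
        rw [hs]
        have hne2 : (1:ℚ) - o.1 ≠ 0 := by linarith
        have e1 : c * (1 - a.1) = (c * (1 - o.1)) * (1 - (subO a o h).1) := by
          show c * (1 - a.1) = (c * (1 - o.1)) * (1 - (a.1 - o.1) / (1 - o.1))
          field_simp
          ring
        have e2 : (c * (1 - o.1)) * (subO a o h).1 = c * a.1 - c * o.1 := by
          show (c * (1 - o.1)) * ((a.1 - o.1) / (1 - o.1)) = c * a.1 - c * o.1
          field_simp
        rw [e1, ihg (c * (1 - o.1)) (subO a o h) (by nlinarith), e2]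
        show _ = dropLen (c * a.1) (toL (c * o.1) f ++ toL (c * (1 - o.1)) g)
        rw [dropLen_append_right _ hpf (by rw [hlen]; nlinarith), hlen]

lemma toL_ap {X Y : Type} (F : S (X → Y)) :
    ∀ (x : S X) (c : ℚ), 0 < c → toL c (ap F x) = apL (toL c F) (toL c x) := by
  induction F with
  | const f =>
      intro x c hc
      show toL c (mapS f x) = apL [(c, f)] (toL c x)
      have hfull : takeLen c (toL c x) = toL c x := by
        have := takeLen_full (posL_toL hc x)
        rwa [lenL_toL] at this
      rw [toL_mapS, apL_cons, apL_nil, List.append_nil, hfull]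
  | glue o Fl Fr ihl ihr =>
      intro x c hc
      have ho1 := o.2.1
      have ho2 := o.2.2
      show toL (c * o.1) (ap Fl (splitL x o)) ++ toL (c * (1 - o.1)) (ap Fr (splitR x o)) =
        apL (toL (c * o.1) Fl ++ toL (c * (1 - o.1)) Fr) (toL c x)
      have htr : apL (toL (c * o.1) Fl) (takeLen (c * o.1) (toL c x)) =
          apL (toL (c * o.1) Fl) (toL c x) := by
        have := apL_trunc (toL (c * o.1) Fl) (toL c x) (posL_toL (by nlinarith) Fl)
        rwa [lenL_toL] at this
      rw [ihl (splitL x o) (c * o.1) (by nlinarith), ihr (splitR x o) (c * (1 - o.1)) (by nlinarith),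
        toL_splitL x c o hc, toL_splitR x c o hc, htr,
        apL_append _ _ _ (posL_toL (by nlinarith) Fl), lenL_toL]

lemma toL_map2 {X Y Z : Type} (h : X → Y → Z) (f : S X) (g : S Y) {c : ℚ} (hc : 0 < c) :
    toL c (map2 h f g) = zipM h (toL c f) (toL c g) := by
  show toL c (ap (mapS h f) g) = _
  rw [toL_ap _ _ _ hc, toL_mapS]
  exact apL_zipM h ((toL c f).length + (toL c g).length) _ _ le_rfl
    (posL_toL hc f) (posL_toL hc g)

lemma mapS_mapS {X Y Z : Type} (k : Y → Z) (h : X → Y) (x : S X) :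
    mapS k (mapS h x) = mapS (fun a => k (h a)) x := by
  induction x with
  | const x => rfl
  | glue o f g ihf ihg => show S.glue _ _ _ = _; rw [ihf, ihg]; rfl

lemma mapS_ap {X Y Z : Type} (k : Y → Z) (F : S (X → Y)) (x : S X) :
    mapS k (ap F x) = ap (mapS (fun f => fun a => k (f a)) F) x := by
  induction F generalizing x with
  | const f => exact mapS_mapS k f x
  | glue o Fl Fr ihl ihr =>
      show S.glue o (mapS k (ap Fl (splitL x o))) (mapS k (ap Fr (splitR x o))) = _
      rw [ihl, ihr]
      rfl

lemma mapS_map2 {X Y Z W : Type} (k : Z → W) (h : X → Y → Z) (f : S X) (g : S Y) :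
    mapS k (map2 h f g) = map2 (fun a b => k (h a b)) f g := by
  show mapS k (ap (mapS h f) g) = ap (mapS (fun a b => k (h a b)) f) g
  rw [mapS_ap, mapS_mapS]


lemma zipM_abs_nonneg (l m : List (ℚ × ℚ)) :
    ∀ p ∈ zipM (fun p q => |p - q|) l m, 0 ≤ p.2 := by
  intro p hp
  rw [zipM_pair _ (l.length + m.length) l m le_rfl] at hp
  simp only [mapP, List.mem_map] at hp
  obtain ⟨q, hq, rfl⟩ := hp
  exact abs_nonneg _

end MAux

/-- The L¹ metric `d¹` on rational step functions satisfies the metric axioms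
with respect to the lifted equality. -/
theorem dOne_is_metric (f g h : S ℚ) :
    0 ≤ dOne f g ∧
    dOne f f = 0 ∧
    dOne f g = dOne g f ∧
    dOne f h ≤ dOne f g + dOne g h ∧
    (dOne f g = 0 → equivS f g) := by
  have key : ∀ u v : S ℚ, dOne u v =
      MAux.sumA (MAux.zipM (fun p q => |p - q|) (MAux.toL 1 u) (MAux.toL 1 v)) := by
    intro u v
    have e1 : mapS (fun q => |q|) (map2 (· - ·) u v) = map2 (fun a b => |a - b|) u v :=
      MAux.mapS_map2 (fun q => |q|) (fun a b => a - b) u v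
    show foldAffine (mapS (fun q => |q|) (map2 (· - ·) u v)) = _
    rw [e1, ← one_mul (foldAffine (map2 (fun a b => |a - b|) u v)), ← MAux.sumA_toL,
      MAux.toL_map2 (fun a b => |a - b|) u v one_pos]
  refine ⟨?_, ?_, ?_, ?_, ?_⟩
  · rw [key]
    exact MAux.sumA_nonneg
      (MAux.posL_zipM _ ((MAux.toL 1 f).length + (MAux.toL 1 g).length) _ _ le_rfl
        (MAux.posL_toL one_pos f) (MAux.posL_toL one_pos g))
      (MAux.zipM_abs_nonneg _ _)
  · rw [key, MAux.zipM_diag]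
    apply MAux.sumA_zero
    intro p hp
    simp only [MAux.mapP, List.mem_map] at hp
    obtain ⟨q, _, rfl⟩ := hp
    simp
  · rw [key, key, MAux.zipM_comm _ ((MAux.toL 1 f).length + (MAux.toL 1 g).length) _ _ le_rfl]
    have hfun : (fun (b a : ℚ) => |a - b|) = (fun (p q : ℚ) => |p - q|) := by
      funext b a
      exact abs_sub_comm a b
    rw [hfun]
  · rw [key, key, key]
    exact MAux.triangle_zip
      ((MAux.toL 1 f).length + (MAux.toL 1 g).length + (MAux.toL 1 h).length) _ _ _ le_rfl
      (MAux.posL_toL one_pos f) (MAux.posL_toL one_pos g) (MAux.posL_toL one_pos h)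
      (by rw [MAux.lenL_toL, MAux.lenL_toL]) (by rw [MAux.lenL_toL, MAux.lenL_toL])
  · intro h0
    rw [key] at h0
    have hz : ∀ p ∈ MAux.zipM (fun p q => |p - q|) (MAux.toL 1 f) (MAux.toL 1 g), p.2 = 0 :=
      MAux.sumA_eq_zero_iff _
        (MAux.posL_zipM _ ((MAux.toL 1 f).length + (MAux.toL 1 g).length) _ _ le_rfl
          (MAux.posL_toL one_pos f) (MAux.posL_toL one_pos g))
        (MAux.zipM_abs_nonneg _ _) h0
    show foldStar (map2 Eq f g)
    rw [MAux.foldStar_toL 1, MAux.toL_map2 Eq f g one_pos,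
      MAux.zipM_pair _ ((MAux.toL 1 f).length + (MAux.toL 1 g).length) _ _ le_rfl]
    intro p hp
    simp only [MAux.mapP, List.mem_map] at hp
    obtain ⟨q, hq, rfl⟩ := hp
    show q.2.1 = q.2.2
    have hmem : (q.1, |q.2.1 - q.2.2|) ∈
        MAux.zipM (fun p q => |p - q|) (MAux.toL 1 f) (MAux.toL 1 g) := by
      rw [MAux.zipM_pair _ ((MAux.toL 1 f).length + (MAux.toL 1 g).length) _ _ le_rfl]
      simp only [MAux.mapP, List.mem_map]
      exact ⟨q, hq, rfl⟩
    have h2 : |q.2.1 - q.2.2| = 0 := hz _ hmem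
    have := abs_eq_zero.1 h2
    linarith [this]
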